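/- arXiv:1410.3010 — 3 statements merged into one kernel-verified Lean document; each statement's English description precedes it below -/
import Mathlib

section
/- Let V, W, X, Y be t-element subsets of [m] whose characteristic vectors satisfy v < w < x < y in binary order, and suppose c1(v,w) = c1(x,y) = i and c2(v,w) = c2(x,y) = j (where c2(v,w) := min{j' > c1(v,w) : v(j')=1, w(j')=0}). Then V ∩ X ≠ V ∩ Y. -/
/-- Binary order on subsets of `Fin m` via characteristic vectors (coordinate 0
most significant): `S < T` iff at the first differing coordinate `i` we have
`i ∉ S` and `i ∈ T`. -/
def binLT {m : ℕ} (S T : Finset (Fin m)) : Prop :=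
  ∃ i : Fin m, i ∉ S ∧ i ∈ T ∧ ∀ j < i, (j ∈ S ↔ j ∈ T)

/-- `c1 S T` : the minimum index `i` with `i ∉ S` and `i ∈ T` (as a natural number). -/
noncomputable def c1 {m : ℕ} (S T : Finset (Fin m)) : ℕ :=
  sInf {i | ∃ h : i < m, (⟨i, h⟩ : Fin m) ∉ S ∧ (⟨i, h⟩ : Fin m) ∈ T}

/-- `c2 S T` : the minimum index `j > c1 S T` with `j ∈ S` and `j ∉ T`. -/
noncomputable def c2 {m : ℕ} (S T : Finset (Fin m)) : ℕ :=
  sInf {j | c1 S T < j ∧ ∃ h : j < m, (⟨j, h⟩ : Fin m) ∈ S ∧ (⟨j, h⟩ : Fin m) ∉ T}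

/-- The coloring `σ(ST) = (c1(ST), c2(ST), f_S(S ∩ T), f_T(S ∩ T))`. -/
noncomputable def sigma {m t : ℕ} (f : Finset (Fin m) → Finset (Fin m) → Fin (2 ^ t))
    (S T : Finset (Fin m)) : ℕ × ℕ × Fin (2 ^ t) × Fin (2 ^ t) :=
  (c1 S T, c2 S T, f S (S ∩ T), f T (S ∩ T))

lemma c2_mem {m : ℕ} {S T : Finset (Fin m)} (h : binLT S T) (hc : S.card = T.card) :
    ∃ hm : c2 S T < m, (⟨c2 S T, hm⟩ : Fin m) ∈ S ∧ (⟨c2 S T, hm⟩ : Fin m) ∉ T := by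
  obtain ⟨i0, hi0S, hi0T, hag⟩ := h
  have hST : (S \ T).Nonempty := by
    rw [← Finset.card_pos, Finset.card_sdiff_comm hc, Finset.card_pos]
    exact ⟨i0, Finset.mem_sdiff.mpr ⟨hi0T, hi0S⟩⟩
  obtain ⟨a, ha⟩ := hST
  rw [Finset.mem_sdiff] at ha
  have hi0a : i0 < a := by
    rcases lt_trichotomy a i0 with hlt | heq | hgt
    · exact absurd ((hag a hlt).mp ha.1) ha.2
    · exact absurd (heq ▸ ha.1) hi0S
    · exact hgt
  have hc1 : c1 S T ≤ (i0 : ℕ) :=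
    Nat.sInf_le ⟨i0.isLt, by simpa using hi0S, by simpa using hi0T⟩
  have hmem : (a : ℕ) ∈ {j | c1 S T < j ∧ ∃ h : j < m,
      (⟨j, h⟩ : Fin m) ∈ S ∧ (⟨j, h⟩ : Fin m) ∉ T} :=
    ⟨lt_of_le_of_lt hc1 hi0a, a.isLt, by simpa using ha.1, by simpa using ha.2⟩
  exact (Nat.sInf_mem ⟨_, hmem⟩).2

theorem stmt_3 {m t : ℕ} (V W X Y : Finset (Fin m))
    (hV : V.card = t) (hW : W.card = t) (hX : X.card = t) (hY : Y.card = t)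
    (hVW : binLT V W) (hWX : binLT W X) (hXY : binLT X Y)
    (i j : ℕ)
    (h1 : c1 V W = i) (h2 : c1 X Y = i)
    (h3 : c2 V W = j) (h4 : c2 X Y = j) :
    V ∩ X ≠ V ∩ Y := by
  obtain ⟨hm1, hjV, hjW⟩ := c2_mem hVW (hV.trans hW.symm)
  obtain ⟨hm2, hjX, hjY⟩ := c2_mem hXY (hX.trans hY.symm)
  have hfin : (⟨c2 X Y, hm2⟩ : Fin m) = ⟨c2 V W, hm1⟩ := Fin.ext (h4.trans h3.symm)
  rw [hfin] at hjX hjY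
  intro heq
  have hmemVX : (⟨c2 V W, hm1⟩ : Fin m) ∈ V ∩ X :=
    Finset.mem_inter.mpr ⟨hjV, hjX⟩
  rw [heq] at hmemVX
  exact hjY (Finset.mem_inter.mp hmemVX).2
end

section
/- Define the coloring σ on pairs of t-subsets of [m] as follows: for characteristic vectors v < w of sets S, T, σ(vw) = (c1(vw), c2(vw), f_S(S∩T), f_T(S∩T)), where c1(vw) is the first index with v=0, w=1, c2(vw) is the first index after c1 with v=1, w=0, and each f_B : 2^B → [2^t] is a fixed injection. Then σ is a (3,2)-coloring: for any three vertices u < v < w, the three pairs uv, uw, vw receive at least 2 distinct colors. -/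
theorem stmt_5 {m t : ℕ} (f : Finset (Fin m) → Finset (Fin m) → Fin (2 ^ t))
    (hf : ∀ B : Finset (Fin m), ∀ S₁ ⊆ B, ∀ S₂ ⊆ B, f B S₁ = f B S₂ → S₁ = S₂)
    (u v w : Finset (Fin m)) (hu : u.card = t) (hv : v.card = t) (hw : w.card = t)
    (huv : binLT u v) (hvw : binLT v w) :
    ¬(sigma f u v = sigma f u w ∧ sigma f u w = sigma f v w) := by
  rintro ⟨h1, h2⟩
  have e1 : c1 u v = c1 v w := by
    have a1 := congrArg Prod.fst h1
    have a2 := congrArg Prod.fst h2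
    simp only [sigma] at a1 a2
    omega
  obtain ⟨i, hiu, hiv, -⟩ := huv
  obtain ⟨j, hjv, hjw, -⟩ := hvw
  have ne1 : {i | ∃ h : i < m, (⟨i, h⟩ : Fin m) ∉ u ∧ (⟨i, h⟩ : Fin m) ∈ v}.Nonempty :=
    ⟨i.val, i.isLt, by simpa using hiu, by simpa using hiv⟩
  have ne2 : {i | ∃ h : i < m, (⟨i, h⟩ : Fin m) ∉ v ∧ (⟨i, h⟩ : Fin m) ∈ w}.Nonempty :=
    ⟨j.val, j.isLt, by simpa using hjv, by simpa using hjw⟩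
  have m1 := Nat.sInf_mem ne1
  have m2 := Nat.sInf_mem ne2
  rw [show sInf {i | ∃ h : i < m, (⟨i, h⟩ : Fin m) ∉ u ∧ (⟨i, h⟩ : Fin m) ∈ v} = c1 u v from rfl,
    e1] at m1
  obtain ⟨h, -, hin⟩ := m1
  obtain ⟨h', hnin, -⟩ := m2
  exact hnin hin
end

section
/- With σ defined as the four-coordinate coloring (c1, c2, f_S(S∩T), f_T(S∩T)) on pairs of t-subsets of [m] (ordered as binary characteristic vectors), there is no monochromatic path of length 2 respecting the order: if v < w < x, then σ(vw) ≠ σ(wx). -/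
theorem stmt_6 {m t : ℕ} (f : Finset (Fin m) → Finset (Fin m) → Fin (2 ^ t))
    (hf : ∀ B : Finset (Fin m), ∀ S₁ ⊆ B, ∀ S₂ ⊆ B, f B S₁ = f B S₂ → S₁ = S₂)
    (v w x : Finset (Fin m)) (hv : v.card = t) (hw : w.card = t) (hx : x.card = t)
    (hvw : binLT v w) (hwx : binLT w x) :
    sigma f v w ≠ sigma f w x := by
  obtain ⟨i, hiS, hiT, hi⟩ := hvw
  obtain ⟨j, hjS, hjT, hj⟩ := hwx
  have key : ∀ (S T : Finset (Fin m)) (i : Fin m), i ∉ S → i ∈ T →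
      (∀ k < i, (k ∈ S ↔ k ∈ T)) → c1 S T = i.val := by
    intro S T i hiS hiT hagree
    refine le_antisymm (Nat.sInf_le ⟨i.isLt, by simpa using hiS, by simpa using hiT⟩) ?_
    refine le_csInf ⟨i.val, i.isLt, by simpa using hiS, by simpa using hiT⟩ ?_
    rintro k ⟨hk, hkS, hkT⟩
    by_contra hlt
    push_neg at hlt
    exact hkS ((hagree ⟨k, hk⟩ hlt).mpr hkT)
  intro heq
  have h1 : c1 v w = c1 w x := congrArg Prod.fst heq
  rw [key v w i hiS hiT hi, key w x j hjS hjT hj] at h1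
  exact hjS (Fin.ext h1 ▸ hiT)
end
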